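/- Let λ be a Ferrers diagram and N(m,n) the number of northeastern lattice paths from (m,0) to (0,n) avoiding the interior of λ. Then for all m, n ≥ 0: N(m,n+1) * N(m+1,n) ≤ N(m,n) * N(m+1,n+1). -/

import Mathlib

/-- A northeastern lattice path from `(m,0)` to `(0,n)`: points `(i,j)` with `i` the row
(increasing southward) and `j` the column (increasing eastward); each step goes one unit
north (`i` decreases) or east (`j` increases). The point sequence is frozen at `(0,n)`
after `m+n` steps. -/
structure NEPath (m n : ℕ) where
  pts : ℕ → ℕ × ℕ
  start : pts 0 = (m, 0)
  step : ∀ k < m + n,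
    ((pts (k+1)).1 + 1 = (pts k).1 ∧ (pts (k+1)).2 = (pts k).2) ∨
    ((pts (k+1)).1 = (pts k).1 ∧ (pts (k+1)).2 = (pts k).2 + 1)
  tail : ∀ k, m + n ≤ k → pts k = (0, n)

/-- A path avoids (the interior of) the Ferrers diagram with row lengths `lam`
(rows indexed from the north starting at 0) iff each of its points `(i,j)` lies weakly
southeast of the staircase boundary, i.e. `lam i ≤ j`; touching the boundary is allowed. -/
def Avoids (lam : ℕ → ℕ) {m n : ℕ} (p : NEPath m n) : Prop :=
  ∀ k, lam (p.pts k).1 ≤ (p.pts k).2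

/-- `pathCount lam m n` is the number of northeastern lattice paths from `(m,0)` to `(0,n)`
that do not go inside the Ferrers diagram `lam`. -/
noncomputable def pathCount (lam : ℕ → ℕ) (m n : ℕ) : ℕ :=
  Nat.card {p : NEPath m n // Avoids lam p}

/-- `lam` is the row-length function of the Ferrers diagram of a partition:
weakly decreasing with finitely many nonzero rows. -/
def IsFerrers (lam : ℕ → ℕ) : Prop :=
  Antitone lam ∧ ∃ K, ∀ i, K ≤ i → lam i = 0

namespace SimionAux

variable {m n : ℕ}

lemma path_ext {p q : NEPath m n} (h : p.pts = q.pts) : p = q := by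
  cases p; cases q; cases h; rfl

lemma col_add (p : NEPath m n) : ∀ k, k ≤ m + n → (p.pts k).2 + m = k + (p.pts k).1 := by
  intro k
  induction k with
  | zero => intro _; rw [p.start]
  | succ k ih =>
    intro hk
    have h1 := ih (by omega)
    rcases p.step k (by omega) with ⟨h2, h3⟩ | ⟨h2, h3⟩ <;> omega

lemma row_le (p : NEPath m n) (k : ℕ) : (p.pts k).1 ≤ m := by
  induction k with
  | zero => rw [p.start]
  | succ k ih =>
    by_cases hk : k < m + n
    · rcases p.step k hk with ⟨h1, _⟩ | ⟨h1, _⟩ <;> omega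
    · rw [p.tail (k+1) (by omega)]; exact Nat.zero_le _

lemma col_mono (p : NEPath m n) : Monotone fun k => (p.pts k).2 := by
  apply monotone_nat_of_le_succ
  intro k
  by_cases hk : k < m + n
  · show (p.pts k).2 ≤ (p.pts (k+1)).2
    rcases p.step k hk with ⟨_, h2⟩ | ⟨_, h2⟩ <;> omega
  · show (p.pts k).2 ≤ (p.pts (k+1)).2
    rw [p.tail k (by omega), p.tail (k+1) (by omega)]

lemma col_le (p : NEPath m n) (k : ℕ) : (p.pts k).2 ≤ n := by
  by_cases hk : k ≤ m + n
  · have h := col_mono p hk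
    simpa [p.tail (m+n) (le_refl _)] using h
  · rw [p.tail k (by omega)]

instance : Finite (NEPath m n) := by
  have hinj : Function.Injective (fun (p : NEPath m n) (i : Fin (m+n+1)) =>
      ((⟨(p.pts i).1, Nat.lt_succ_of_le (row_le p i)⟩ : Fin (m+1)),
       (⟨(p.pts i).2, Nat.lt_succ_of_le (col_le p i)⟩ : Fin (n+1)))) := by
    intro p p' h
    apply path_ext
    funext k
    by_cases hk : k ≤ m + n
    · have hh := congrFun h ⟨k, by omega⟩
      simp only [Prod.mk.injEq, Fin.mk.injEq] at hh
      exact Prod.ext_iff.mpr hh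
    · rw [p.tail k (by omega), p'.tail k (by omega)]
  exact Finite.of_injective _ hinj

lemma meet_of_min (p : NEPath m (n+1)) (q : NEPath (m+1) n) (k : ℕ)
    (hk1 : k ≤ m + n) (hk2 : (q.pts (k+1)).1 ≤ (p.pts k).1)
    (hmin : ∀ j < k, ¬((q.pts (j+1)).1 ≤ (p.pts j).1)) :
    p.pts k = q.pts (k+1) := by
  have hrow : (p.pts k).1 = (q.pts (k+1)).1 := by
    cases k with
    | zero =>
      have hq1 := q.step 0 (by omega)
      have hp0 : (p.pts 0).1 = m := by rw [p.start]
      have hq0 : (q.pts 0).1 = m + 1 := by rw [q.start]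
      omega
    | succ j =>
      have hj := hmin j (by omega)
      have hps := p.step j (by omega)
      have hqs := q.step (j+1) (by omega)
      omega
  have hc1 := col_add p k (by omega)
  have hc2 := col_add q (k+1) (by omega)
  exact Prod.ext_iff.mpr ⟨hrow, by omega⟩

lemma exists_meet (p : NEPath m (n+1)) (q : NEPath (m+1) n) :
    ∃ j, j ≤ m + n ∧ p.pts j = q.pts (j+1) := by
  classical
  have hex : ∃ j, j ≤ m + n ∧ (q.pts (j+1)).1 ≤ (p.pts j).1 := by
    refine ⟨m + n, le_refl _, ?_⟩
    rw [q.tail (m+n+1) (by omega)]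
    exact Nat.zero_le _
  obtain ⟨hk1, hk2⟩ := Nat.find_spec hex
  refine ⟨Nat.find hex, hk1, meet_of_min p q _ hk1 hk2 ?_⟩
  intro j hj hcond
  exact Nat.find_min hex hj ⟨by omega, hcond⟩

/-- the swapped path from `(m,0)` to `(0,n)`: beginning of `p`, tail of `q`. -/
def pathA (p : NEPath m (n+1)) (q : NEPath (m+1) n) (k : ℕ) (hk : k ≤ m + n)
    (hmeet : p.pts k = q.pts (k+1)) : NEPath m n where
  pts := fun j => if j ≤ k then p.pts j else q.pts (j+1)
  start := by simp [p.start]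
  step := by
    intro j hj
    by_cases h1 : j + 1 ≤ k
    · simp only [if_pos h1, if_pos (by omega : j ≤ k)]
      exact p.step j (by omega)
    · simp only [if_neg h1]
      have hpts : (if j ≤ k then p.pts j else q.pts (j+1)) = q.pts (j+1) := by
        by_cases h2 : j ≤ k
        · have : j = k := by omega
          rw [if_pos h2, this, hmeet]
        · rw [if_neg h2]
      rw [hpts]
      exact q.step (j+1) (by omega)
  tail := by
    intro j hj
    show (if j ≤ k then p.pts j else q.pts (j+1)) = (0, n)
    by_cases h2 : j ≤ k
    · have hjk : j = k := by omega
      rw [if_pos h2, hjk, hmeet, q.tail (k+1) (by omega)]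
    · rw [if_neg h2, q.tail (j+1) (by omega)]

/-- the swapped path from `(m+1,0)` to `(0,n+1)`: beginning of `q`, tail of `p`. -/
def pathB (p : NEPath m (n+1)) (q : NEPath (m+1) n) (k : ℕ) (hk : k ≤ m + n)
    (hmeet : p.pts k = q.pts (k+1)) : NEPath (m+1) (n+1) where
  pts := fun j => if j ≤ k + 1 then q.pts j else p.pts (j - 1)
  start := by simp [q.start]
  step := by
    intro j hj
    by_cases h1 : j + 1 ≤ k + 1
    · simp only [if_pos h1, if_pos (by omega : j ≤ k + 1)]
      exact q.step j (by omega)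
    · simp only [if_neg h1]
      have hred : j + 1 - 1 = j := by omega
      rw [hred]
      have hpts : (if j ≤ k + 1 then q.pts j else p.pts (j - 1)) = p.pts (j - 1) := by
        by_cases h2 : j ≤ k + 1
        · have : j = k + 1 := by omega
          rw [if_pos h2, this, ← hmeet]
          simp
        · rw [if_neg h2]
      rw [hpts]
      have hjj : j = (j - 1) + 1 := by omega
      rw [hjj]
      exact p.step (j - 1) (by omega)
  tail := by
    intro j hj
    show (if j ≤ k + 1 then q.pts j else p.pts (j - 1)) = (0, n + 1)
    rw [if_neg (by omega : ¬ j ≤ k + 1), p.tail (j-1) (by omega)]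

lemma pathA_pts (p : NEPath m (n+1)) (q : NEPath (m+1) n) (k : ℕ) (hk : k ≤ m + n)
    (hmeet : p.pts k = q.pts (k+1)) (j : ℕ) :
    (pathA p q k hk hmeet).pts j = if j ≤ k then p.pts j else q.pts (j+1) := rfl

lemma pathB_pts (p : NEPath m (n+1)) (q : NEPath (m+1) n) (k : ℕ) (hk : k ≤ m + n)
    (hmeet : p.pts k = q.pts (k+1)) (j : ℕ) :
    (pathB p q k hk hmeet).pts j = if j ≤ k + 1 then q.pts j else p.pts (j - 1) := rfl

lemma meet_ex (p : NEPath m (n+1)) (q : NEPath (m+1) n) : ∃ j, p.pts j = q.pts (j+1) := by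
  obtain ⟨j, _, h⟩ := exists_meet p q
  exact ⟨j, h⟩

open Classical in
lemma find_le (p : NEPath m (n+1)) (q : NEPath (m+1) n) :
    Nat.find (meet_ex p q) ≤ m + n := by
  obtain ⟨j, hj, h⟩ := exists_meet p q
  exact le_trans (Nat.find_min' _ h) hj

open Classical in
/-- The tail-swapping injection Ψ. -/
noncomputable def Psi (lam : ℕ → ℕ) (m n : ℕ)
    (x : {p : NEPath m (n+1) // Avoids lam p} × {q : NEPath (m+1) n // Avoids lam q}) :
    {p : NEPath m n // Avoids lam p} × {q : NEPath (m+1) (n+1) // Avoids lam q} :=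
  ⟨⟨pathA x.1.1 x.2.1 (Nat.find (meet_ex x.1.1 x.2.1)) (find_le x.1.1 x.2.1)
      (Nat.find_spec (meet_ex x.1.1 x.2.1)), by
    intro j
    rw [pathA_pts]
    by_cases hj : j ≤ Nat.find (meet_ex x.1.1 x.2.1)
    · rw [if_pos hj]; exact x.1.2 j
    · rw [if_neg hj]; exact x.2.2 (j+1)⟩,
   ⟨pathB x.1.1 x.2.1 (Nat.find (meet_ex x.1.1 x.2.1)) (find_le x.1.1 x.2.1)
      (Nat.find_spec (meet_ex x.1.1 x.2.1)), by
    intro j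
    rw [pathB_pts]
    by_cases hj : j ≤ Nat.find (meet_ex x.1.1 x.2.1) + 1
    · rw [if_pos hj]; exact x.2.2 j
    · rw [if_neg hj]; exact x.1.2 (j-1)⟩⟩

open Classical in
lemma Psi_inj (lam : ℕ → ℕ) (m n : ℕ) : Function.Injective (Psi lam m n) := by
  rintro ⟨⟨p, hp⟩, ⟨q, hq⟩⟩ ⟨⟨p', hp'⟩, ⟨q', hq'⟩⟩ h
  simp only [Psi, Prod.mk.injEq, Subtype.mk.injEq] at h
  obtain ⟨hA, hB⟩ := h
  set k := Nat.find (meet_ex p q) with hkdef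
  set k' := Nat.find (meet_ex p' q') with hk'def
  have hmk : p.pts k = q.pts (k+1) := Nat.find_spec (meet_ex p q)
  have hmk' : p'.pts k' = q'.pts (k'+1) := Nat.find_spec (meet_ex p' q')
  have hApts : ∀ j, (if j ≤ k then p.pts j else q.pts (j+1)) =
      (if j ≤ k' then p'.pts j else q'.pts (j+1)) := by
    intro j
    have := congrArg (fun x => NEPath.pts (Subtype.val x)) hA
    exact congrFun this j
  have hBpts : ∀ j, (if j ≤ k + 1 then q.pts j else p.pts (j-1)) =
      (if j ≤ k' + 1 then q'.pts j else p'.pts (j-1)) := by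
    intro j
    have := congrArg (fun x => NEPath.pts (Subtype.val x)) hB
    exact congrFun this j
  -- first show k = k'
  have hkk : k = k' := by
    by_contra hne
    rcases Nat.lt_or_ge k k' with hlt | hge
    · -- p'.pts k = q'.pts (k+1), contradicting minimality of k'
      have h1 := hApts k
      rw [if_pos (le_refl _), if_pos (by omega : k ≤ k')] at h1
      have h2 := hBpts (k+1)
      rw [if_pos (le_refl _), if_pos (by omega : k + 1 ≤ k' + 1)] at h2
      have : p'.pts k = q'.pts (k+1) := by rw [← h1, ← h2, hmk]
      have hle : Nat.find (meet_ex p' q') ≤ k := Nat.find_min' (meet_ex p' q') this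
      omega
    · have hlt : k' < k := by omega
      have h1 := hApts k'
      rw [if_pos (by omega : k' ≤ k), if_pos (le_refl _)] at h1
      have h2 := hBpts (k'+1)
      rw [if_pos (by omega : k' + 1 ≤ k + 1), if_pos (le_refl _)] at h2
      have : p.pts k' = q.pts (k'+1) := by rw [h1, h2, hmk']
      have hle : Nat.find (meet_ex p q) ≤ k' := Nat.find_min' (meet_ex p q) this
      omega
  clear hA hB hmk hmk' hkdef hk'def
  clear_value k k'
  subst hkk
  have hpeq : p = p' := by
    apply path_ext
    funext j
    by_cases hj : j ≤ k
    · have h1 := hApts j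
      rwa [if_pos hj, if_pos hj] at h1
    · have h1 := hBpts (j+1)
      rw [if_neg (by omega : ¬ j + 1 ≤ k + 1), if_neg (by omega : ¬ j + 1 ≤ k + 1)] at h1
      simpa using h1
  have hqeq : q = q' := by
    apply path_ext
    funext j
    by_cases hj : j ≤ k + 1
    · have h1 := hBpts j
      rwa [if_pos hj, if_pos hj] at h1
    · have h1 := hApts (j-1)
      rw [if_neg (by omega : ¬ j - 1 ≤ k), if_neg (by omega : ¬ j - 1 ≤ k)] at h1
      have hjj : j - 1 + 1 = j := by omega
      rwa [hjj] at h1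
  subst hpeq; subst hqeq
  rfl

end SimionAux


/-- Equation (1) of the paper, proved by the tail-swapping injection Ψ. -/
theorem simion_eq_one (lam : ℕ → ℕ) (hlam : IsFerrers lam) (m n : ℕ) :
    pathCount lam m (n + 1) * pathCount lam (m + 1) n ≤
      pathCount lam m n * pathCount lam (m + 1) (n + 1) := by
  have h1 : pathCount lam m (n + 1) * pathCount lam (m + 1) n =
      Nat.card ({p : NEPath m (n+1) // Avoids lam p} × {q : NEPath (m+1) n // Avoids lam q}) :=
    (Nat.card_prod _ _).symm
  have h2 : pathCount lam m n * pathCount lam (m + 1) (n + 1) =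
      Nat.card ({p : NEPath m n // Avoids lam p} × {q : NEPath (m+1) (n+1) // Avoids lam q}) :=
    (Nat.card_prod _ _).symm
  rw [h1, h2]
  exact Nat.card_le_card_of_injective _ (SimionAux.Psi_inj lam m n)
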